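/- Let λ ∈ (0, 1) and let r₁, r₂, r₁', r₂', r₁'', r₂'', e', e'' ∈ ℝ^d satisfy the componentwise inequalities r₁'' ≥ λr₁ and λr₂ + (1−λ)r₁' ≤ 0, together with ⟨e'', r₂''⟩ ≥ (1−λ)⟨e', r₂'⟩. Then for all vectors x, y ∈ ℝ^d with x ≥ 0 and y ≥ 0 componentwise, ⟨r₁'', x⟩ + ⟨r₂'', e''⟩ ≥ λ(⟨r₁, x⟩ + ⟨r₂, y⟩) + (1−λ)(⟨r₁', y⟩ + ⟨r₂', e'⟩) ≥ min(⟨r₁, x⟩ + ⟨r₂, y⟩, ⟨r₁', y⟩ + ⟨r₂', e'⟩); that is, under Model A the score of the consequent fact (r'', (x, e'')) is at least the minimum of the scores of the two antecedent facts, enforcing the property-transitivity rule ProTrans(r, r', e', r'', e''). -/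

import Mathlib

open RealInnerProductSpace

/-- Sufficient constraints for the property-transitivity rule
ProTrans(r, r', e', r'', e'') under the inner-product score (Model A). -/
theorem proTrans_modelA {d : ℕ} (l : ℝ) (hl₀ : 0 < l) (hl₁ : l < 1)
    (r₁ r₂ r₁' r₂' r₁'' r₂'' e' e'' : EuclideanSpace ℝ (Fin d))
    (h₁ : ∀ i, l * r₁ i ≤ r₁'' i)
    (h₂ : ∀ i, l * r₂ i + (1 - l) * r₁' i ≤ 0)
    (h₃ : (1 - l) * ⟪e', r₂'⟫ ≤ ⟪e'', r₂''⟫) :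
    ∀ x y : EuclideanSpace ℝ (Fin d), (∀ i, 0 ≤ x i) → (∀ i, 0 ≤ y i) →
      l * (⟪r₁, x⟫ + ⟪r₂, y⟫) + (1 - l) * (⟪r₁', y⟫ + ⟪r₂', e'⟫)
          ≤ ⟪r₁'', x⟫ + ⟪r₂'', e''⟫ ∧
      min (⟪r₁, x⟫ + ⟪r₂, y⟫) (⟪r₁', y⟫ + ⟪r₂', e'⟫)
          ≤ l * (⟪r₁, x⟫ + ⟪r₂, y⟫) + (1 - l) * (⟪r₁', y⟫ + ⟪r₂', e'⟫) := by
  intro x y hx hy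
  constructor
  · have hA : l * ⟪r₁, x⟫ ≤ ⟪r₁'', x⟫ := by
      simp only [PiLp.inner_apply, RCLike.inner_apply, conj_trivial, Finset.mul_sum]
      refine Finset.sum_le_sum fun i _ => ?_
      rw [← mul_assoc]
      linarith [mul_le_mul_of_nonneg_right (h₁ i) (hx i)]
    have hB : l * ⟪r₂, y⟫ + (1 - l) * ⟪r₁', y⟫ ≤ 0 := by
      simp only [PiLp.inner_apply, RCLike.inner_apply, conj_trivial, Finset.mul_sum]
      rw [← Finset.sum_add_distrib]
      refine Finset.sum_nonpos fun i _ => ?_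
      have := mul_le_mul_of_nonneg_right (h₂ i) (hy i)
      linarith [this]
    have hC : (1 - l) * ⟪r₂', e'⟫ ≤ ⟪r₂'', e''⟫ := by
      simpa [real_inner_comm, mul_comm] using h₃
    nlinarith
  · rcases le_total (⟪r₁, x⟫ + ⟪r₂, y⟫) (⟪r₁', y⟫ + ⟪r₂', e'⟫) with h | h
    · simp only [min_eq_left h]
      nlinarith
    · simp only [min_eq_right h]
      nlinarith
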